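/- Let X be a finite nonempty set and E : X → ℝ an energy function. If ε(x) for x ∈ X are i.i.d. samples from the standard Gumbel distribution with density γ(t) = exp(-t - exp(-t)), then for any x̂ ∈ X, the probability that x̂ is the unique maximizer of -E(x) + ε(x) equals exp(-E(x̂)) / Σ_{y ∈ X} exp(-E(y)). -/

import Mathlib

open MeasureTheory ProbabilityTheory Real
open Set Filter Topology


lemma gumbel_hasDerivAt (c : ℝ) (hc : c ≠ 0) (t : ℝ) :
    HasDerivAt (fun t => c⁻¹ * Real.exp (-(c * Real.exp (-t))))
      (Real.exp (-t - c * Real.exp (-t))) t := by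
  have h1 : HasDerivAt (fun t : ℝ => -t) (-1) t := (hasDerivAt_id t).neg
  have h2 : HasDerivAt (fun t : ℝ => Real.exp (-t)) (Real.exp (-t) * (-1)) t :=
    (Real.hasDerivAt_exp (-t)).comp t h1
  have h3 : HasDerivAt (fun t : ℝ => -(c * Real.exp (-t)))
      (-(c * (Real.exp (-t) * (-1)))) t := (h2.const_mul c).neg
  have h4 : HasDerivAt (fun t : ℝ => Real.exp (-(c * Real.exp (-t))))
      (Real.exp (-(c * Real.exp (-t))) * -(c * (Real.exp (-t) * (-1)))) t :=
    (Real.hasDerivAt_exp _).comp t h3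
  have h5 := h4.const_mul c⁻¹
  refine h5.congr_deriv ?_
  rw [sub_eq_add_neg, Real.exp_add]
  field_simp

lemma gumbel_integrable (c : ℝ) (hc : 0 < c) :
    Integrable (fun t => Real.exp (-t - c * Real.exp (-t))) := by
  have hcont : Continuous fun t : ℝ => Real.exp (-t - c * Real.exp (-t)) := by
    continuity
  rw [← integrableOn_univ, ← Set.Iic_union_Ioi (a := (0:ℝ))]
  apply IntegrableOn.union
  · -- on Iic 0, bound by exp (4/c) * exp t
    apply Integrable.mono' ((integrableOn_exp_Iic 0).const_mul (Real.exp (4/c)))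
    · exact hcont.aestronglyMeasurable.restrict
    · filter_upwards [ae_restrict_mem measurableSet_Iic] with t ht
      rw [norm_of_nonneg (Real.exp_nonneg _), ← Real.exp_add]
      apply Real.exp_le_exp.mpr
      have hsq : t^2/4 ≤ Real.exp (-t) := by
        have h0 : -t/2 ≤ Real.exp (-t/2) := by
          have := Real.add_one_le_exp (-t/2); linarith
        have h0' : (0:ℝ) ≤ -t/2 := by simp only [mem_Iic] at ht; linarith
        have h1 := mul_self_le_mul_self h0' h0
        rw [← Real.exp_add] at h1
        have h2 : -t/2 + -t/2 = -t := by ring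
        rw [h2] at h1
        nlinarith [h1]
      have hc4 : c * (4/c) = 4 := by field_simp
      nlinarith [mul_le_mul_of_nonneg_left hsq hc.le, sq_nonneg (c*t/2 + 2), hc4, hc]
  · apply Integrable.mono' (exp_neg_integrableOn_Ioi 0 (by norm_num : (0:ℝ) < 1))
    · exact hcont.aestronglyMeasurable.restrict
    · filter_upwards [ae_restrict_mem measurableSet_Ioi] with t _
      rw [norm_of_nonneg (Real.exp_nonneg _)]
      apply Real.exp_le_exp.mpr
      have := mul_nonneg hc.le (Real.exp_nonneg (-t))
      rw [neg_one_mul]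
      linarith

lemma gumbel_tendsto_atBot (c : ℝ) (hc : 0 < c) :
    Tendsto (fun t => c⁻¹ * Real.exp (-(c * Real.exp (-t)))) atBot (𝓝 0) := by
  have h1 : Tendsto (fun t : ℝ => Real.exp (-t)) atBot atTop :=
    Real.tendsto_exp_atTop.comp tendsto_neg_atBot_atTop
  have h2 : Tendsto (fun t : ℝ => -(c * Real.exp (-t))) atBot atBot :=
    tendsto_neg_atTop_atBot.comp (h1.const_mul_atTop hc)
  have h3 := (Real.tendsto_exp_atBot.comp h2).const_mul c⁻¹
  rw [mul_zero] at h3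
  exact h3

lemma gumbel_tendsto_atTop (c : ℝ) :
    Tendsto (fun t => c⁻¹ * Real.exp (-(c * Real.exp (-t)))) atTop (𝓝 c⁻¹) := by
  have h1 : Tendsto (fun t : ℝ => Real.exp (-t)) atTop (𝓝 0) :=
    Real.tendsto_exp_atBot.comp tendsto_neg_atTop_atBot
  have h2 : Tendsto (fun t : ℝ => -(c * Real.exp (-t))) atTop (𝓝 0) := by
    simpa using (h1.const_mul c).neg
  have h3 := ((Real.continuous_exp.tendsto 0).comp h2).const_mul c⁻¹
  simpa using h3

lemma gumbel_integral (c : ℝ) (hc : 0 < c) :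
    ∫ t, Real.exp (-t - c * Real.exp (-t)) = c⁻¹ := by
  have := integral_of_hasDerivAt_of_tendsto
    (fun t => gumbel_hasDerivAt c hc.ne' t) (gumbel_integrable c hc)
    (gumbel_tendsto_atBot c hc) (gumbel_tendsto_atTop c)
  simpa using this

lemma gumbel_integral_Iic (c : ℝ) (hc : 0 < c) (a : ℝ) :
    ∫ t in Iic a, Real.exp (-t - c * Real.exp (-t))
      = c⁻¹ * Real.exp (-(c * Real.exp (-a))) := by
  have := integral_Iic_of_hasDerivAt_of_tendsto' (a := a)
    (fun t _ => gumbel_hasDerivAt c hc.ne' t) (gumbel_integrable c hc).integrableOn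
    (gumbel_tendsto_atBot c hc)
  simpa using this

noncomputable def gumbelMeasure : Measure ℝ :=
  MeasureTheory.volume.withDensity fun t => ENNReal.ofReal (Real.exp (-t - Real.exp (-t)))

lemma gumbel_density_measurable :
    Measurable fun t : ℝ => ENNReal.ofReal (Real.exp (-t - Real.exp (-t))) := by
  apply Measurable.ennreal_ofReal
  fun_prop

lemma gumbel_integrable_one : Integrable (fun t : ℝ => Real.exp (-t - Real.exp (-t))) := by
  simpa using gumbel_integrable 1 one_pos

lemma gumbelMeasure_Iic (a : ℝ) :
    gumbelMeasure (Iic a) = ENNReal.ofReal (Real.exp (-Real.exp (-a))) := by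
  rw [gumbelMeasure, withDensity_apply _ measurableSet_Iic,
    ← ofReal_integral_eq_lintegral_ofReal gumbel_integrable_one.integrableOn
      (ae_of_all _ fun t => (Real.exp_pos _).le)]
  have := gumbel_integral_Iic 1 one_pos a
  simp only [one_mul, inv_one] at this
  rw [this]

lemma gumbelMeasure_Iio (a : ℝ) :
    gumbelMeasure (Iio a) = ENNReal.ofReal (Real.exp (-Real.exp (-a))) := by
  rw [gumbelMeasure, withDensity_apply _ measurableSet_Iio,
    setLIntegral_congr Iio_ae_eq_Iic, ← withDensity_apply _ measurableSet_Iic,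
    ← gumbelMeasure, gumbelMeasure_Iic]

instance gumbelMeasure_prob : IsProbabilityMeasure gumbelMeasure := by
  constructor
  rw [gumbelMeasure, withDensity_apply _ MeasurableSet.univ, Measure.restrict_univ,
    ← ofReal_integral_eq_lintegral_ofReal gumbel_integrable_one
      (ae_of_all _ fun t => (Real.exp_pos _).le)]
  have := gumbel_integral 1 one_pos
  simp only [one_mul, inv_one] at this
  rw [this, ENNReal.ofReal_one]

lemma gumbel_key (K : ℝ) (hK : 0 ≤ K) :
    ∫⁻ t, ENNReal.ofReal (Real.exp (-(K * Real.exp (-t)))) ∂gumbelMeasure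
      = ENNReal.ofReal (1 + K)⁻¹ := by
  have hc : (0:ℝ) < 1 + K := by linarith
  rw [gumbelMeasure, lintegral_withDensity_eq_lintegral_mul _ gumbel_density_measurable
    (by apply Measurable.ennreal_ofReal; fun_prop)]
  have heq : ∀ t : ℝ, ENNReal.ofReal (Real.exp (-t - Real.exp (-t))) *
      ENNReal.ofReal (Real.exp (-(K * Real.exp (-t))))
      = ENNReal.ofReal (Real.exp (-t - (1 + K) * Real.exp (-t))) := by
    intro t
    rw [← ENNReal.ofReal_mul (Real.exp_nonneg _), ← Real.exp_add]
    congr 1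
    ring_nf
  simp only [Pi.mul_apply]
  rw [lintegral_congr heq,
    ← ofReal_integral_eq_lintegral_ofReal (gumbel_integrable _ hc)
      (ae_of_all _ fun t => (Real.exp_pos _).le), gumbel_integral _ hc]

lemma map_eq_gumbelMeasure {Ω : Type*} [MeasurableSpace Ω] (μ : Measure Ω)
    [IsProbabilityMeasure μ] (f : Ω → ℝ) (hf : Measurable f)
    (h : ∀ t, μ {ω | f ω ≤ t} = ENNReal.ofReal (Real.exp (-Real.exp (-t)))) :
    μ.map f = gumbelMeasure := by
  haveI : IsProbabilityMeasure (μ.map f) := Measure.isProbabilityMeasure_map hf.aemeasurable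
  refine Measure.ext_of_Iic _ _ fun a => ?_
  rw [Measure.map_apply hf measurableSet_Iic, gumbelMeasure_Iic]
  exact h a

/-- **Gumbel max trick** (Gumbel 1954): for i.i.d. standard Gumbel perturbations
`ε x` of the negative energies `-E x` on a finite nonempty set `X`, the probability
that `xhat` is the (unique) maximizer of `-E x + ε x` is the Gibbs probability
`exp (-E xhat) / ∑ y, exp (-E y)`. -/
theorem gumbel_max_trick {X Ω : Type*} [Fintype X] [Nonempty X]
    [MeasurableSpace Ω] (μ : Measure Ω) [IsProbabilityMeasure μ]
    (E : X → ℝ) (ε : X → Ω → ℝ) (hmeas : ∀ x, Measurable (ε x))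
    (hindep : iIndepFun ε μ)
    (hgumbel : ∀ x t, μ {ω | ε x ω ≤ t} = ENNReal.ofReal (Real.exp (-Real.exp (-t))))
    (xhat : X) :
    μ {ω | ∀ y, y ≠ xhat → -E y + ε y ω < -E xhat + ε xhat ω}
      = ENNReal.ofReal (Real.exp (-E xhat) / ∑ y, Real.exp (-E y)) := by
  classical
  set Φ : Ω → (X → ℝ) := fun ω x => ε x ω with hΦdef
  have hΦ : Measurable Φ := measurable_pi_lambda _ fun x => hmeas x
  have hmap : ∀ x, μ.map (ε x) = gumbelMeasure :=
    fun x => map_eq_gumbelMeasure μ (ε x) (hmeas x) (hgumbel x)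
  -- the joint law is the product of Gumbel measures
  have hpi : μ.map Φ = Measure.pi (fun _ : X => gumbelMeasure) := by
    symm
    apply Measure.pi_eq
    intro B hB
    rw [Measure.map_apply hΦ (MeasurableSet.univ_pi hB)]
    have hpre : Φ ⁻¹' (Set.pi Set.univ B) = ⋂ x, ε x ⁻¹' B x := by
      ext ω; simp [Φ, Set.mem_pi]
    rw [hpre, hindep.meas_iInter fun x => ⟨B x, hB x, rfl⟩]
    exact Finset.prod_congr rfl fun x _ => by
      rw [← hmap x, Measure.map_apply (hmeas x) (hB x)]
  set S : Set (X → ℝ) := {f | ∀ y, y ≠ xhat → -E y + f y < -E xhat + f xhat} with hSdef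
  have hS : MeasurableSet S := by
    have hrw : S = ⋂ y, {f : X → ℝ | y ≠ xhat → -E y + f y < -E xhat + f xhat} := by
      ext f; simp [hSdef, Set.mem_iInter]
    rw [hrw]
    refine MeasurableSet.iInter fun y => ?_
    by_cases hy : y = xhat
    · simp [hy]
    · have : {f : X → ℝ | y ≠ xhat → -E y + f y < -E xhat + f xhat}
          = {f : X → ℝ | -E y + f y < -E xhat + f xhat} := by
        ext f; simp [hy]
      rw [this]
      exact measurableSet_lt ((measurable_pi_apply y).const_add _)
        ((measurable_pi_apply xhat).const_add _)
  have hevent : {ω | ∀ y, y ≠ xhat → -E y + ε y ω < -E xhat + ε xhat ω} = Φ ⁻¹' S := rfl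
  rw [hevent, ← Measure.map_apply hΦ hS, hpi]
  -- split off the coordinate `xhat`
  haveI hU : Unique {x : X // x = xhat} := ⟨⟨⟨xhat, rfl⟩⟩, fun a => Subtype.ext a.2⟩
  have hmp := measurePreserving_piEquivPiSubtypeProd
    (fun _ : X => gumbelMeasure) (fun x => x = xhat)
  set e := MeasurableEquiv.piEquivPiSubtypeProd (fun _ : X => ℝ) (fun x => x = xhat) with he
  set T := e.symm ⁻¹' S with hTdef
  have hTm : MeasurableSet T := e.symm.measurable hS
  have hsplit := hmp.measure_preimage hTm.nullMeasurableSet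
  have hpre2 : ⇑e ⁻¹' T = S := by
    ext f
    simp [hTdef]
  rw [hpre2] at hsplit
  rw [hsplit, Measure.prod_apply hTm]
  set K : ℝ := ∑ y : {x : X // ¬ x = xhat}, Real.exp (E xhat - E ↑y) with hK
  have hKnn : 0 ≤ K := Finset.sum_nonneg fun _ _ => (Real.exp_pos _).le
  set F : ℝ → ENNReal := fun t => ENNReal.ofReal (Real.exp (-(K * Real.exp (-t)))) with hF
  have hFm : Measurable F := by apply Measurable.ennreal_ofReal; fun_prop
  have hval : ∀ (g : ∀ _ : {x : X // x = xhat}, ℝ) (h : ∀ _ : {x : X // ¬ x = xhat}, ℝ),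
      (∀ (y : {x : X // ¬ x = xhat}), (e.symm (g, h)) ↑y = h y)
        ∧ (e.symm (g, h)) xhat = g ⟨xhat, rfl⟩ := by
    intro g h
    constructor
    · intro y
      simp [he, MeasurableEquiv.piEquivPiSubtypeProd, Equiv.piEquivPiSubtypeProd_symm_apply,
        y.2]
    · simp [he, MeasurableEquiv.piEquivPiSubtypeProd, Equiv.piEquivPiSubtypeProd_symm_apply]
  have hpoint : ∀ g, (Measure.pi fun _ : {x : X // ¬ x = xhat} => gumbelMeasure)
      (Prod.mk g ⁻¹' T) = F (g ⟨xhat, rfl⟩) := by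
    intro g
    have hbox : Prod.mk g ⁻¹' T = Set.pi Set.univ
        (fun y : {x : X // ¬ x = xhat} => Iio (E ↑y - E xhat + g ⟨xhat, rfl⟩)) := by
      ext h
      simp only [Set.mem_preimage, hTdef, hSdef, Set.mem_setOf_eq, Set.mem_pi, Set.mem_univ,
        forall_true_left, Set.mem_Iio]
      constructor
      · intro hmem y
        have h1 := hmem ↑y y.2
        rw [(hval g h).1 y, (hval g h).2] at h1
        linarith
      · intro hmem y hy
        have h1 := hmem ⟨y, hy⟩
        rw [(hval g h).1 ⟨y, hy⟩, (hval g h).2]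
        dsimp at h1 ⊢
        linarith
    rw [hbox, Measure.pi_pi]
    have hIio : ∀ y : {x : X // ¬ x = xhat},
        gumbelMeasure (Iio (E ↑y - E xhat + g ⟨xhat, rfl⟩))
          = ENNReal.ofReal (Real.exp (-(Real.exp (E xhat - E ↑y)
              * Real.exp (-(g ⟨xhat, rfl⟩))))) := by
      intro y
      rw [gumbelMeasure_Iio]
      congr 3
      rw [← Real.exp_add]
      congr 1
      ring
    rw [Finset.prod_congr rfl fun y _ => hIio y,
      ← ENNReal.ofReal_prod_of_nonneg (fun y _ => (Real.exp_pos _).le)]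
    rw [hF]
    congr 1
    rw [← Real.exp_sum]
    congr 1
    rw [hK, Finset.sum_mul]
    simp [Finset.sum_neg_distrib]
  rw [lintegral_congr hpoint]
  have hpu := measurePreserving_piUnique (fun _ : {x : X // x = xhat} => gumbelMeasure)
  have happ : ∀ g : {x : X // x = xhat} → ℝ,
      (MeasurableEquiv.piUnique (fun _ : {x : X // x = xhat} => ℝ)) g = g ⟨xhat, rfl⟩ := by
    intro g
    simp only [MeasurableEquiv.piUnique, Equiv.piUnique, MeasurableEquiv.coe_mk, Equiv.coe_fn_mk]
    exact congrArg g (Subsingleton.elim _ _)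
  have hchg := hpu.lintegral_comp hFm
  have hchg2 : (∫⁻ g : {x : X // x = xhat} → ℝ, F (g ⟨xhat, rfl⟩)
        ∂(Measure.pi fun _ : {x : X // x = xhat} => gumbelMeasure))
      = ∫⁻ t, F t ∂gumbelMeasure :=
    (lintegral_congr fun g => (congrArg F (happ g)).symm).trans hchg
  have hfinal : ENNReal.ofReal (1 + K)⁻¹
      = ENNReal.ofReal (Real.exp (-E xhat) / ∑ y, Real.exp (-E y)) := by
    congr 1
    have hsum : ∑ y : X, Real.exp (-E y) = Real.exp (-E xhat) * (1 + K) := by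
      have h1 : ∑ y : X, Real.exp (-E y)
          = Real.exp (-E xhat) + ∑ y ∈ Finset.univ.erase xhat, Real.exp (-E y) :=
        (Finset.add_sum_erase _ _ (Finset.mem_univ xhat)).symm
      have h2 : ∑ y ∈ Finset.univ.erase xhat, Real.exp (-E y)
          = ∑ y : {x : X // ¬ x = xhat}, Real.exp (-E ↑y) :=
        Finset.sum_subtype _ (fun x => by simp [Finset.mem_erase]) _
      rw [h1, h2, hK, mul_add, mul_one, Finset.mul_sum]
      congr 1
      refine Finset.sum_congr rfl fun y _ => ?_
      rw [← Real.exp_add]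
      congr 1
      ring
    have hpos : (0:ℝ) < 1 + K := by linarith
    rw [hsum]
    rw [eq_div_iff (by positivity)]
    field_simp
  refine Eq.trans ?_ ((gumbel_key K hKnn).trans hfinal)
  have hinst : (Fintype.subtypeEq xhat) = (Subtype.fintype fun x : X => x = xhat) :=
    Subsingleton.elim _ _
  convert hchg2 using 3
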